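/- Let k ≥ 2 be an integer, σ > 0, D_k > 0, and C_k' > 0 be reals, and let δ ≥ 0 be a real that is not an integer. For each i = 1, …, k−1, let T_i > 0 and C_i > 0 be reals such that ⌈(D_k + δ·T_i)/T_i⌉ > ⌈δ⌉, and set U_i = C_i/T_i, g_i = ⌊(D_k + δ·T_i)/T_i⌋, and t_i = (g_i − δ)·T_i. Also set t_k = D_k, and assume the tasks are indexed so that t_1 ≤ t_2 ≤ ⋯ ≤ t_{k−1}. Define α_i = σ·g_i/(g_i − δ) and β_i = σ/(g_i − δ). Then (1) every g_i is an integer with g_i > δ; (2) 0 < α_i ≤ σ·⌈δ⌉/(⌈δ⌉ − δ) and 0 < β_i ≤ σ/(⌈δ⌉ − δ) for every i; (3) for every j ∈ {1, …, k}, C_k' + Σ_{i=1}^{k−1} σ·⌈(t_j + δ·T_i)/T_i⌉·C_i ≤ C_k' + Σ_{i=1}^{k−1} α_i·t_i·U_i + Σ_{i=1}^{j−1} β_i·t_i·U_i. Consequently, if there exists j ∈ {1, …, k} with C_k' + Σ_{i=1}^{k−1} α_i·t_i·U_i + Σ_{i=1}^{j−1} β_i·t_i·U_i ≤ t_j, then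 there exists t with 0 < t ≤ D_k and C_k' + Σ_{i=1}^{k−1} σ·⌈(t + δ·T_i)/T_i⌉·C_i ≤ t. -/

import Mathlib

open Finset

theorem arrival_jitter_k2u_parameters
    (k : ℕ) (hk : 2 ≤ k) (σ Dk Ck' δ : ℝ)
    (hσ : 0 < σ) (hDk : 0 < Dk) (hCk' : 0 < Ck') (hδ : 0 ≤ δ)
    (hδint : ∀ n : ℤ, (n : ℝ) ≠ δ)
    (T C : ℕ → ℝ)
    (hT : ∀ i ∈ Finset.Icc 1 (k - 1), 0 < T i)
    (hC : ∀ i ∈ Finset.Icc 1 (k - 1), 0 < C i)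
    (hhp1 : ∀ i ∈ Finset.Icc 1 (k - 1), ⌈δ⌉ < ⌈(Dk + δ * T i) / T i⌉)
    (U : ℕ → ℝ) (hU : ∀ i ∈ Finset.Icc 1 (k - 1), U i = C i / T i)
    (g : ℕ → ℤ) (hg : ∀ i ∈ Finset.Icc 1 (k - 1), g i = ⌊(Dk + δ * T i) / T i⌋)
    (t : ℕ → ℝ) (ht : ∀ i ∈ Finset.Icc 1 (k - 1), t i = ((g i : ℝ) - δ) * T i)
    (htk : t k = Dk)
    (hmono : ∀ i ∈ Finset.Icc 1 (k - 1), ∀ j ∈ Finset.Icc 1 (k - 1), i ≤ j → t i ≤ t j)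
    (A B : ℕ → ℝ)
    (hA : ∀ i ∈ Finset.Icc 1 (k - 1), A i = σ * (g i : ℝ) / ((g i : ℝ) - δ))
    (hB : ∀ i ∈ Finset.Icc 1 (k - 1), B i = σ / ((g i : ℝ) - δ)) :
    (∀ i ∈ Finset.Icc 1 (k - 1), δ < (g i : ℝ)) ∧
    (∀ i ∈ Finset.Icc 1 (k - 1),
      (0 < A i ∧ A i ≤ σ * (⌈δ⌉ : ℝ) / ((⌈δ⌉ : ℝ) - δ)) ∧
      (0 < B i ∧ B i ≤ σ / ((⌈δ⌉ : ℝ) - δ))) ∧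
    (∀ j ∈ Finset.Icc 1 k,
      Ck' + ∑ i ∈ Finset.Icc 1 (k - 1), σ * (⌈(t j + δ * T i) / T i⌉ : ℝ) * C i
        ≤ Ck' + (∑ i ∈ Finset.Icc 1 (k - 1), A i * t i * U i)
            + (∑ i ∈ Finset.Icc 1 (j - 1), B i * t i * U i)) ∧
    ((∃ j ∈ Finset.Icc 1 k,
        Ck' + (∑ i ∈ Finset.Icc 1 (k - 1), A i * t i * U i)
          + (∑ i ∈ Finset.Icc 1 (j - 1), B i * t i * U i) ≤ t j) →
      ∃ t' : ℝ, 0 < t' ∧ t' ≤ Dk ∧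
        Ck' + ∑ i ∈ Finset.Icc 1 (k - 1), σ * (⌈(t' + δ * T i) / T i⌉ : ℝ) * C i ≤ t') := by
  have hceilδ : δ < (⌈δ⌉ : ℝ) :=
    lt_of_le_of_ne (Int.le_ceil δ) (fun h => hδint ⌈δ⌉ h.symm)
  have hceilsub : 0 < (⌈δ⌉ : ℝ) - δ := by linarith
  have hgge : ∀ i ∈ Finset.Icc 1 (k - 1), ⌈δ⌉ ≤ g i := by
    intro i hi
    have h1 := hhp1 i hi
    have h2 : ⌈(Dk + δ * T i) / T i⌉ ≤ ⌊(Dk + δ * T i) / T i⌋ + 1 :=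
      Int.ceil_le_floor_add_one _
    rw [hg i hi]; omega
  have part1 : ∀ i ∈ Finset.Icc 1 (k - 1), δ < (g i : ℝ) := by
    intro i hi
    have h3 : (⌈δ⌉ : ℝ) ≤ (g i : ℝ) := by exact_mod_cast hgge i hi
    linarith
  have hsub : ∀ i ∈ Finset.Icc 1 (k - 1), 0 < (g i : ℝ) - δ := by
    intro i hi; linarith [part1 i hi]
  have hgpos : ∀ i ∈ Finset.Icc 1 (k - 1), 0 < (g i : ℝ) := by
    intro i hi; linarith [part1 i hi]
  have part2 : ∀ i ∈ Finset.Icc 1 (k - 1),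
      (0 < A i ∧ A i ≤ σ * (⌈δ⌉ : ℝ) / ((⌈δ⌉ : ℝ) - δ)) ∧
      (0 < B i ∧ B i ≤ σ / ((⌈δ⌉ : ℝ) - δ)) := by
    intro i hi
    have h1 := hsub i hi
    have h2 := hgpos i hi
    have h3 : (⌈δ⌉ : ℝ) ≤ (g i : ℝ) := by exact_mod_cast hgge i hi
    refine ⟨⟨?_, ?_⟩, ?_, ?_⟩
    · rw [hA i hi]; exact div_pos (mul_pos hσ h2) h1
    · rw [hA i hi, div_le_div_iff₀ h1 hceilsub]
      nlinarith [mul_nonneg (mul_nonneg hσ.le hδ) (sub_nonneg.2 h3)]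
    · rw [hB i hi]; exact div_pos hσ h1
    · rw [hB i hi, div_le_div_iff₀ h1 hceilsub]
      nlinarith
  have htle : ∀ i ∈ Finset.Icc 1 (k - 1), t i ≤ Dk := by
    intro i hi
    have hTi := hT i hi
    have hfl : (g i : ℝ) ≤ (Dk + δ * T i) / T i := by
      rw [hg i hi]; exact Int.floor_le _
    have h := (le_div_iff₀ hTi).1 hfl
    rw [ht i hi]; nlinarith
  have htpos : ∀ i ∈ Finset.Icc 1 (k - 1), 0 < t i := by
    intro i hi
    rw [ht i hi]; exact mul_pos (hsub i hi) (hT i hi)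
  have hAtU : ∀ i ∈ Finset.Icc 1 (k - 1), A i * t i * U i = σ * (g i : ℝ) * C i := by
    intro i hi
    have h1 : ((g i : ℝ) - δ) ≠ 0 := ne_of_gt (hsub i hi)
    have h2 : T i ≠ 0 := ne_of_gt (hT i hi)
    rw [hA i hi, ht i hi, hU i hi]
    field_simp
  have hBtU : ∀ i ∈ Finset.Icc 1 (k - 1), B i * t i * U i = σ * C i := by
    intro i hi
    have h1 : ((g i : ℝ) - δ) ≠ 0 := ne_of_gt (hsub i hi)
    have h2 : T i ≠ 0 := ne_of_gt (hT i hi)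
    rw [hB i hi, ht i hi, hU i hi]
    field_simp
  have htjDk : ∀ j ∈ Finset.Icc 1 k, t j ≤ Dk := by
    intro j hj
    rw [Finset.mem_Icc] at hj
    rcases eq_or_lt_of_le hj.2 with h | h
    · rw [h, htk]
    · exact htle j (Finset.mem_Icc.2 ⟨hj.1, by omega⟩)
  have part3 : ∀ j ∈ Finset.Icc 1 k,
      Ck' + ∑ i ∈ Finset.Icc 1 (k - 1), σ * (⌈(t j + δ * T i) / T i⌉ : ℝ) * C i
        ≤ Ck' + (∑ i ∈ Finset.Icc 1 (k - 1), A i * t i * U i)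
            + (∑ i ∈ Finset.Icc 1 (j - 1), B i * t i * U i) := by
    intro j hj
    have hjDk := htjDk j hj
    rw [Finset.mem_Icc] at hj
    have hterm : ∀ i ∈ Finset.Icc 1 (k - 1),
        σ * (⌈(t j + δ * T i) / T i⌉ : ℝ) * C i
          ≤ σ * (g i : ℝ) * C i + (if i ∈ Finset.Icc 1 (j - 1) then σ * C i else 0) := by
      intro i hi
      have hCi := hC i hi
      have hTi := hT i hi
      by_cases hcase : i ∈ Finset.Icc 1 (j - 1)
      · rw [if_pos hcase]
        have hc : ⌈(t j + δ * T i) / T i⌉ ≤ g i + 1 := by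
          have hmonoc : ⌈(t j + δ * T i) / T i⌉ ≤ ⌈(Dk + δ * T i) / T i⌉ := by
            apply Int.ceil_le_ceil
            exact (div_le_div_iff_of_pos_right hTi).2 (by linarith)
          have h2 : ⌈(Dk + δ * T i) / T i⌉ ≤ ⌊(Dk + δ * T i) / T i⌋ + 1 :=
            Int.ceil_le_floor_add_one _
          rw [hg i hi]
          omega
        have hc' : (⌈(t j + δ * T i) / T i⌉ : ℝ) ≤ (g i : ℝ) + 1 := by exact_mod_cast hc
        nlinarith [mul_nonneg (mul_pos hσ hCi).le (sub_nonneg.2 hc')]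
      · rw [if_neg hcase]
        rw [Finset.mem_Icc] at hi hcase
        have hji : j ≤ i := by omega
        have hjmem : j ∈ Finset.Icc 1 (k - 1) := Finset.mem_Icc.2 ⟨hj.1, le_trans hji hi.2⟩
        have htji : t j ≤ t i := hmono j hjmem i (Finset.mem_Icc.2 hi) hji
        have hc : ⌈(t j + δ * T i) / T i⌉ ≤ g i := by
          rw [Int.ceil_le, div_le_iff₀ hTi]
          rw [ht i (Finset.mem_Icc.2 hi)] at htji
          nlinarith
        have hc' : (⌈(t j + δ * T i) / T i⌉ : ℝ) ≤ (g i : ℝ) := by exact_mod_cast hc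
        nlinarith [mul_nonneg (mul_pos hσ hCi).le (sub_nonneg.2 hc')]
    have hsum := Finset.sum_le_sum hterm
    rw [Finset.sum_add_distrib] at hsum
    have hinter : Finset.Icc 1 (k - 1) ∩ Finset.Icc 1 (j - 1) = Finset.Icc 1 (j - 1) := by
      apply Finset.inter_eq_right.2
      apply Finset.Icc_subset_Icc le_rfl
      omega
    rw [Finset.sum_ite_mem, hinter] at hsum
    have e1 : ∑ i ∈ Finset.Icc 1 (k - 1), A i * t i * U i
        = ∑ i ∈ Finset.Icc 1 (k - 1), σ * (g i : ℝ) * C i :=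
      Finset.sum_congr rfl hAtU
    have e2 : ∑ i ∈ Finset.Icc 1 (j - 1), B i * t i * U i
        = ∑ i ∈ Finset.Icc 1 (j - 1), σ * C i := by
      apply Finset.sum_congr rfl
      intro i hi
      apply hBtU
      rw [Finset.mem_Icc] at hi ⊢
      omega
    rw [e1, e2]
    linarith
  refine ⟨part1, part2, part3, ?_⟩
  rintro ⟨j, hj, hle⟩
  have hjpos : 0 < t j := by
    have hj' := Finset.mem_Icc.1 hj
    rcases eq_or_lt_of_le hj'.2 with h | h
    · rw [h, htk]; exact hDk
    · exact htpos j (Finset.mem_Icc.2 ⟨hj'.1, by omega⟩)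
  exact ⟨t j, hjpos, htjDk j hj, le_trans (part3 j hj) hle⟩
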